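/- Let n ≡ 1 or 3 (mod 8) be an odd integer with n > 1. If S is a cardioidal starter for ℤ_n, then S is a Skolem starter. Moreover, S is a strong starter if and only if n ≢ 0 (mod 3). -/
import Mathlib


/-- The sum of the two entries of an unordered pair. -/
def pairSum {n : ℕ} : Sym2 (ZMod n) → ZMod n :=
  Sym2.lift ⟨fun x y => x + y, fun x y => add_comm x y⟩

/-- `S` is a starter for `ℤ_n`: a set of unordered pairs of distinct nonzero
elements such that every nonzero element lies in exactly one pair, and for every
nonzero `a` there is exactly one pair whose (signed) difference is `a`. -/
def IsStarter (n : ℕ) (S : Set (Sym2 (ZMod n))) : Prop :=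
  (∀ z ∈ S, ¬ z.IsDiag) ∧
  (∀ z ∈ S, (0 : ZMod n) ∉ z) ∧
  (∀ a : ZMod n, a ≠ 0 → ∃! z, z ∈ S ∧ a ∈ z) ∧
  (∀ a : ZMod n, a ≠ 0 → ∃! z, z ∈ S ∧ ∃ x y : ZMod n, z = s(x, y) ∧ x - y = a)

/-- A starter is strong if the pair sums are nonzero and pairwise distinct. -/
def IsStrongStarter (n : ℕ) (S : Set (Sym2 (ZMod n))) : Prop :=
  IsStarter n S ∧ (∀ z ∈ S, pairSum z ≠ 0) ∧
    ∀ z ∈ S, ∀ w ∈ S, pairSum z = pairSum w → z = w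

/-- A starter is Skolem if, identifying `ℤ_n ∖ {0}` with `1, …, n-1` via `ZMod.val`,
for every `i = 1, …, (n-1)/2` some pair `{x, y}` with `y > x` satisfies `y - x ≡ i (mod n)`. -/
def IsSkolemStarter (n : ℕ) (S : Set (Sym2 (ZMod n))) : Prop :=
  IsStarter n S ∧ ∀ i : ℕ, 1 ≤ i → i ≤ (n - 1) / 2 →
    ∃ z ∈ S, ∃ x y : ZMod n, z = s(x, y) ∧ x.val < y.val ∧ y - x = (i : ZMod n)

/-- A strong Skolem starter is a starter that is both strong and Skolem. -/
def IsStrongSkolemStarter (n : ℕ) (S : Set (Sym2 (ZMod n))) : Prop :=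
  IsStrongStarter n S ∧ IsSkolemStarter n S

/-- A starter for `ℤ_n` is cardioidal if each of its pairs has the form `{x, 2x}`. -/
def IsCardioidal (n : ℕ) (S : Set (Sym2 (ZMod n))) : Prop :=
  IsStarter n S ∧ ∀ z ∈ S, ∃ x : ZMod n, z = s(x, 2 * x)

lemma pairSum_mk {n : ℕ} (a b : ZMod n) : pairSum s(a, b) = a + b := rfl

theorem cardioidal_is_skolem_and_strong_iff (n : ℕ) (hn : 1 < n)
    (h8 : n % 8 = 1 ∨ n % 8 = 3) (S : Set (Sym2 (ZMod n)))
    (hS : IsCardioidal n S) :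
    IsSkolemStarter n S ∧ (IsStrongStarter n S ↔ ¬ (3 ∣ n)) := by
  haveI : NeZero n := ⟨by omega⟩
  haveI : Fact (1 < n) := ⟨hn⟩
  obtain ⟨hst, hcard⟩ := hS
  obtain ⟨hdiag, hzero, hmem, hdiff⟩ := hst
  have hodd : n % 2 = 1 := by omega
  constructor
  · refine ⟨⟨hdiag, hzero, hmem, hdiff⟩, ?_⟩
    intro i hi1 hi2
    have h2in : 2 * i < n := by omega
    have hiv : ((i : ℕ) : ZMod n).val = i := by
      rw [ZMod.val_natCast, Nat.mod_eq_of_lt (by omega)]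
    have h2iv : ((2 * i : ℕ) : ZMod n).val = 2 * i := by
      rw [ZMod.val_natCast, Nat.mod_eq_of_lt h2in]
    have hine : ((i : ℕ) : ZMod n) ≠ 0 := by
      intro h; rw [h, ZMod.val_zero] at hiv; omega
    have h2ine : ((2 * i : ℕ) : ZMod n) ≠ 0 := by
      intro h; rw [h, ZMod.val_zero] at h2iv; omega
    obtain ⟨z, ⟨hzS, x, y, hz, hxy⟩, -⟩ := hdiff ((i : ℕ) : ZMod n) hine
    obtain ⟨c, hc⟩ := hcard z hzS
    rw [hc] at hz
    rcases Sym2.eq_iff.mp hz.symm with ⟨hx, hy⟩ | ⟨hx, hy⟩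
    · -- x = c, y = 2c : difference c - 2c = -c = i, so c = -i
      have hcval : c = -((i : ℕ) : ZMod n) := by
        have : c - 2 * c = ((i : ℕ) : ZMod n) := by rw [hx, hy] at hxy; exact hxy
        linear_combination -this
      refine ⟨z, hzS, 2 * c, c, ?_, ?_, ?_⟩
      · rw [hc, Sym2.eq_swap]
      · have h1 : c.val = n - i := by
          rw [hcval, ZMod.neg_val, if_neg hine, hiv]
        have h2 : (2 * c).val = n - 2 * i := by
          have : 2 * c = -(((2 * i : ℕ) : ZMod n)) := by
            rw [hcval]; push_cast; ring
          rw [this, ZMod.neg_val, if_neg h2ine, h2iv]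
        rw [h1, h2]; omega
      · linear_combination hxy - (by rw [hx, hy] : x - y = c - 2 * c)
    · -- x = 2c, y = c : difference 2c - c = c = i
      have hcval : c = ((i : ℕ) : ZMod n) := by
        have : 2 * c - c = ((i : ℕ) : ZMod n) := by rw [hx, hy] at hxy; exact hxy
        linear_combination this
      refine ⟨z, hzS, c, 2 * c, hc, ?_, ?_⟩
      · have h2 : (2 * c).val = 2 * i := by
          have : 2 * c = ((2 * i : ℕ) : ZMod n) := by rw [hcval]; push_cast; ring
          rw [this, h2iv]
        rw [h2, hcval, hiv]; omega
      · rw [hcval]; ring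
  · constructor
    · rintro ⟨-, hne0, -⟩ ⟨m, hm⟩
      have hm1 : 1 ≤ m := by omega
      have hmn : m < n := by omega
      have hxne : ((m : ℕ) : ZMod n) ≠ 0 := by
        rw [Ne, ZMod.natCast_eq_zero_iff]
        intro h; exact absurd (Nat.le_of_dvd (by omega) h) (by omega)
      have h3x : 3 * ((m : ℕ) : ZMod n) = 0 := by
        have : ((3 * m : ℕ) : ZMod n) = ((n : ℕ) : ZMod n) := by rw [← hm]
        rw [ZMod.natCast_self] at this
        push_cast at this
        exact this
      obtain ⟨z, ⟨hzS, hxz⟩, -⟩ := hmem ((m : ℕ) : ZMod n) hxne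
      obtain ⟨c, hc⟩ := hcard z hzS
      rw [hc] at hxz
      have hu2 : IsUnit (2 : ZMod n) := by
        have := (ZMod.isUnit_iff_coprime 2 n).mpr
          (Nat.prime_two.coprime_iff_not_dvd.mpr (by omega))
        simpa using this
      have h3c : 3 * c = 0 := by
        rcases Sym2.mem_iff.mp hxz with h | h
        · rw [h] at h3x; exact h3x
        · have : (2 : ZMod n) * (3 * c) = 0 := by
            linear_combination h3x - 3 * h
          exact (hu2.mul_right_eq_zero).mp this
      refine hne0 z hzS ?_
      rw [hc, pairSum_mk]
      linear_combination h3c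
    · intro h3
      have hu3 : IsUnit (3 : ZMod n) := by
        have := (ZMod.isUnit_iff_coprime 3 n).mpr
          (Nat.prime_three.coprime_iff_not_dvd.mpr h3)
        simpa using this
      refine ⟨⟨hdiag, hzero, hmem, hdiff⟩, ?_, ?_⟩
      · intro z hzS
        obtain ⟨c, hc⟩ := hcard z hzS
        have hcne : c ≠ 0 := by
          intro h; exact hzero z hzS (by rw [hc, h]; exact Sym2.mem_mk_left 0 (2 * 0))
        rw [hc, pairSum_mk]
        intro h
        exact hcne ((hu3.mul_right_eq_zero).mp (by linear_combination h))
      · intro z hzS w hwS hsum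
        obtain ⟨c, hc⟩ := hcard z hzS
        obtain ⟨d, hd⟩ := hcard w hwS
        rw [hc, hd, pairSum_mk, pairSum_mk] at hsum
        have : c = d := by
          have h3 : (3 : ZMod n) * c = 3 * d := by linear_combination hsum
          exact hu3.mul_left_cancel h3
        rw [hc, hd, this]
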